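/- The local parity rule (rule 150) applied to the configuration with a single 1 on a circular lattice of size n ≥ 7 never reaches a homogeneous configuration; in particular rule 150 does not solve the parity problem. -/

import Mathlib

/-- Global rule of a one-dimensional binary circular CA of radius `r` on `n` cells. -/
def glob (r n : ℕ) (f : (Fin (2*r+1) → Bool) → Bool) (X : ZMod n → Bool) :
    ZMod n → Bool :=
  fun i => f (fun j => X (i + ((j : ℕ) : ZMod n) - (r : ZMod n)))

/-- Number of 1s (cells in state `true`) of a circular configuration. -/
def ones (n : ℕ) (X : ZMod n → Bool) : ℕ :=
  ((Finset.range n).filter (fun i : ℕ => X (i : ZMod n) = true)).card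

def allZeros (n : ℕ) : ZMod n → Bool := fun _ => false
def allOnes (n : ℕ) : ZMod n → Bool := fun _ => true

/-- The CA converges from `X` to `P`: `P` is a fixed point reached in finitely many steps. -/
def convergesTo (r n : ℕ) (f : (Fin (2*r+1) → Bool) → Bool)
    (X P : ZMod n → Bool) : Prop :=
  glob r n f P = P ∧ ∃ k, (glob r n f)^[k] X = P

/-- A rule is perfect if it solves the parity problem on every odd-sized circular lattice. -/
def PerfectRule (r : ℕ) (f : (Fin (2*r+1) → Bool) → Bool) : Prop :=
  ∀ n : ℕ, Odd n → ∀ X : ZMod n → Bool,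
    (Odd (ones n X) → convergesTo r n f X (allOnes n)) ∧
    (Even (ones n X) → convergesTo r n f X (allZeros n))

/-- Number of active transitions (cells changing state) in one step. -/
def activeCount (r n : ℕ) (f : (Fin (2*r+1) → Bool) → Bool) (X : ZMod n → Bool) : ℕ :=
  ((Finset.range n).filter
    (fun i : ℕ => glob r n f X (i : ZMod n) ≠ X (i : ZMod n))).card

/-- Rule 150: the local parity rule `f(a,b,c) = a XOR b XOR c`. -/
def rule150 (v : Fin (2*1+1) → Bool) : Bool := xor (v 0) (xor (v 1) (v 2))

/-- The configuration with a single 1 at position 0. -/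
def singleOne (n : ℕ) : ZMod n → Bool := fun i => decide (i = 0)

/-- Rule 150 computes the xor of the three neighbors. -/
lemma glob150 (n : ℕ) (X : ZMod n → Bool) (i : ZMod n) :
    glob 1 n rule150 X i = xor (X (i - 1)) (xor (X i) (X (i + 1))) := by
  unfold glob rule150
  norm_num
  congr 2 <;> ring

lemma pow_mod_eq {K : Type*} [CommRing K] {ζ : K} {n : ℕ} (hζ : ζ ^ n = 1) (a : ℕ) :
    ζ ^ (a % n) = ζ ^ a := by
  conv_rhs => rw [← Nat.mod_add_div a n]
  rw [pow_add, pow_mul, hζ, one_pow, mul_one]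

lemma ite_xor {K : Type*} [CommRing K] (h2 : (2:K) = 0) (a b : Bool) :
    (if xor a b then (1:K) else 0) = (if a then (1:K) else 0) + (if b then (1:K) else 0) := by
  cases a <;> cases b <;> simp
  rw [← one_add_one_eq_two] at h2
  exact h2.symm

/-- The key invariant: DFT-like evaluation of a configuration at an `n`-th root of unity. -/
noncomputable def psi (n : ℕ) [NeZero n] {K : Type*} [CommRing K] (ζ : K)
    (X : ZMod n → Bool) : K :=
  ∑ i : ZMod n, (if X i then (1:K) else 0) * ζ ^ (ZMod.val i)

lemma psi_step {n : ℕ} [NeZero n] (hn : 2 ≤ n) {K : Type*} [CommRing K] (h2 : (2:K) = 0)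
    {ζ : K} (hζ : ζ ^ n = 1) (X : ZMod n → Bool) :
    psi n ζ (glob 1 n rule150 X) * ζ = (1 + ζ + ζ ^ 2) * psi n ζ X := by
  haveI : Fact (1 < n) := ⟨by omega⟩
  have key : ∀ a : ZMod n, ζ ^ (a + 1).val = ζ ^ a.val * ζ := by
    intro a
    rw [ZMod.val_add, ZMod.val_one, pow_mod_eq hζ, pow_succ]
  have expand : psi n ζ (glob 1 n rule150 X)
      = (∑ i : ZMod n, (if X (i-1) then (1:K) else 0) * ζ ^ (ZMod.val i))
      + psi n ζ X
      + (∑ i : ZMod n, (if X (i+1) then (1:K) else 0) * ζ ^ (ZMod.val i)) := by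
    unfold psi
    rw [← Finset.sum_add_distrib, ← Finset.sum_add_distrib]
    apply Finset.sum_congr rfl
    intro i _
    rw [glob150, ite_xor h2, ite_xor h2]
    ring
  have hA : (∑ i : ZMod n, (if X (i-1) then (1:K) else 0) * ζ ^ (ZMod.val i))
      = psi n ζ X * ζ := by
    unfold psi
    rw [Finset.sum_mul]
    refine (Fintype.sum_equiv (Equiv.addRight (1 : ZMod n))
      (fun j => (if X j then (1:K) else 0) * ζ ^ (ZMod.val j) * ζ)
      (fun i => (if X (i-1) then (1:K) else 0) * ζ ^ (ZMod.val i)) ?_).symm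
    intro j
    simp only [Equiv.coe_addRight, add_sub_cancel_right, key j]
    ring
  have hC : (∑ i : ZMod n, (if X (i+1) then (1:K) else 0) * ζ ^ (ZMod.val i)) * ζ
      = psi n ζ X := by
    unfold psi
    rw [Finset.sum_mul]
    refine Fintype.sum_equiv (Equiv.addRight (1 : ZMod n))
      (fun i => (if X (i+1) then (1:K) else 0) * ζ ^ (ZMod.val i) * ζ)
      (fun j => (if X j then (1:K) else 0) * ζ ^ (ZMod.val j)) ?_
    intro j
    simp only [Equiv.coe_addRight, key j]
    ring
  rw [expand, add_mul, add_mul, hA, hC]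
  ring

lemma psi_iter {n : ℕ} [NeZero n] (hn : 2 ≤ n) {K : Type*} [CommRing K] (h2 : (2:K) = 0)
    {ζ : K} (hζ : ζ ^ n = 1) (X : ZMod n → Bool) (k : ℕ) :
    psi n ζ ((glob 1 n rule150)^[k] X) * ζ ^ k = (1 + ζ + ζ ^ 2) ^ k * psi n ζ X := by
  induction k with
  | zero => simp
  | succ k ih =>
    calc psi n ζ ((glob 1 n rule150)^[k+1] X) * ζ ^ (k+1)
        = (psi n ζ (glob 1 n rule150 ((glob 1 n rule150)^[k] X)) * ζ) * ζ ^ k := by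
          rw [Function.iterate_succ_apply']; ring
      _ = ((1+ζ+ζ^2) * psi n ζ ((glob 1 n rule150)^[k] X)) * ζ ^ k := by
          rw [psi_step hn h2 hζ]
      _ = (1+ζ+ζ^2) * (psi n ζ ((glob 1 n rule150)^[k] X) * ζ ^ k) := by ring
      _ = (1+ζ+ζ^2)^(k+1) * psi n ζ X := by rw [ih]; ring

lemma psi_singleOne {n : ℕ} [NeZero n] {K : Type*} [CommRing K] (ζ : K) :
    psi n ζ (singleOne n) = 1 := by
  unfold psi singleOne
  rw [Finset.sum_eq_single 0]
  · simp
  · intro b _ hb; simp [hb]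
  · simp

lemma psi_allZeros {n : ℕ} [NeZero n] {K : Type*} [CommRing K] (ζ : K) :
    psi n ζ (allZeros n) = 0 := by
  simp [psi, allZeros]

lemma psi_allOnes {n : ℕ} [NeZero n] {K : Type*} [CommRing K] (ζ : K) :
    psi n ζ (allOnes n) = ∑ k ∈ Finset.range n, ζ ^ k := by
  unfold psi allOnes
  simp only [if_pos, one_mul]
  cases n with
  | zero => exact absurd rfl (NeZero.ne 0)
  | succ m => exact Fin.sum_univ_eq_sum_range (fun k => ζ ^ k) (m+1)

/-- On odd-size lattices, the all-ones configuration is never reached: evaluate at a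
primitive `n`-th root of unity in a cyclotomic extension of `𝔽₂`. -/
lemma never_allOnes_odd (m : ℕ+) (hn : 7 ≤ (m:ℕ)) (ho : Odd (m:ℕ)) (k : ℕ) :
    (glob 1 (m:ℕ) rule150)^[k] (singleOne (m:ℕ)) ≠ allOnes (m:ℕ) := by
  intro h
  haveI : NeZero (m:ℕ) := ⟨by omega⟩
  have hn2 : 2 ≤ (m:ℕ) := by omega
  haveI : NeZero (((m:ℕ)) : ZMod 2) := ⟨by
    rw [Ne, ZMod.natCast_eq_zero_iff]
    exact fun hd => (Nat.not_even_iff_odd.mpr ho) (even_iff_two_dvd.mpr hd)⟩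
  obtain ⟨ζ, hζ⟩ := IsCyclotomicExtension.exists_isPrimitiveRoot (ZMod 2)
    (B := CyclotomicField m (ZMod 2)) (Set.mem_singleton (m:ℕ)) (NeZero.ne _)
  have hζn : ζ ^ (m:ℕ) = 1 := hζ.pow_eq_one
  have h2K : (2 : CyclotomicField m (ZMod 2)) = 0 := by
    haveI := charP_of_injective_algebraMap
      (algebraMap (ZMod 2) (CyclotomicField m (ZMod 2))).injective 2
    exact_mod_cast CharP.cast_eq_zero (CyclotomicField m (ZMod 2)) 2
  have hne1 : ζ ≠ 1 := by
    intro h1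
    have : (m:ℕ) ∣ 1 := hζ.dvd_of_pow_eq_one 1 (by rw [h1, one_pow])
    have := Nat.le_of_dvd (by norm_num) this
    omega
  have h3 : 1 + ζ + ζ ^ 2 ≠ 0 := by
    intro h0
    have hc : ζ ^ 3 - 1 = (ζ - 1) * (1 + ζ + ζ ^ 2) := by ring
    rw [h0, mul_zero, sub_eq_zero] at hc
    have : (m:ℕ) ∣ 3 := hζ.dvd_of_pow_eq_one 3 hc
    have := Nat.le_of_dvd (by norm_num) this
    omega
  have hit := psi_iter hn2 h2K hζn (singleOne (m:ℕ)) k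
  rw [h, psi_allOnes, psi_singleOne, mul_one] at hit
  have hgs : (∑ i ∈ Finset.range (m:ℕ), ζ ^ i) = 0 := by
    rw [geom_sum_eq hne1, hζn, sub_self, zero_div]
  rw [hgs, zero_mul] at hit
  exact pow_ne_zero k h3 hit.symm

/-- Rule 150 from the single-1 seed never reaches a homogeneous configuration (`n ≥ 7`). -/
lemma never (n : ℕ) (hn : 7 ≤ n) (k : ℕ) :
    (glob 1 n rule150)^[k] (singleOne n) ≠ allZeros n ∧
    (glob 1 n rule150)^[k] (singleOne n) ≠ allOnes n := by
  haveI : NeZero n := ⟨by omega⟩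
  have hn2 : 2 ≤ n := by omega
  have h2Z : (2 : ZMod 2) = 0 := rfl
  have hζ1 : (1 : ZMod 2) ^ n = 1 := one_pow n
  have hONE : ∀ k, psi n (1 : ZMod 2) ((glob 1 n rule150)^[k] (singleOne n)) = 1 := by
    intro k
    have h := psi_iter hn2 h2Z hζ1 (singleOne n) k
    rw [psi_singleOne, one_pow, mul_one, mul_one] at h
    rw [h]
    have : (1 + 1 + 1 ^ 2 : ZMod 2) = 1 := by decide
    rw [this, one_pow]
  constructor
  · intro h
    have h1 := hONE k
    rw [h, psi_allZeros] at h1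
    exact absurd h1 (by decide)
  · rcases Nat.even_or_odd n with he | ho
    · intro h
      have h1 := hONE k
      rw [h, psi_allOnes] at h1
      simp only [one_pow, Finset.sum_const, Finset.card_range, nsmul_eq_mul, mul_one] at h1
      rw [(ZMod.natCast_eq_zero_iff n 2).mpr he.two_dvd] at h1
      exact absurd h1 (by decide)
    · exact never_allOnes_odd ⟨n, by omega⟩ hn ho k

/-- rule 150 from the single-1 configuration on a circular lattice of
size `n ≥ 7` never reaches a homogeneous configuration; in particular it is not a
perfect parity rule. -/
theorem stmt3 (n : ℕ) (hn : 7 ≤ n) :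
    (∀ k : ℕ, (glob 1 n rule150)^[k] (singleOne n) ≠ allZeros n ∧
              (glob 1 n rule150)^[k] (singleOne n) ≠ allOnes n) ∧
    ¬ PerfectRule 1 rule150 := by
  refine ⟨fun k => never n hn k, fun hP => ?_⟩
  have hodd : Odd (ones 7 (singleOne 7)) := by
    rw [Nat.odd_iff]
    decide
  obtain ⟨-, k, hk⟩ := (hP 7 ⟨3, rfl⟩ (singleOne 7)).1 hodd
  exact (never 7 le_rfl k).2 hk
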